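/- Let t ≥ 1 and let σ_t be the powered rotation map on V × ({0,…,d−1})^t (defined by successively applying σ along the label sequence and reversing the output labels), and let W_t = S_t C_t be the flip-flop walk operator built from σ_t on ℂ^(V × ({0,…,d−1})^t). Assume σ_t has no fixed points. If Φ is a unit vector with W_t Φ = e^{iφ} Φ for some real φ with 0 < φ < π, then there exists a real eigenvalue μ of the normalized adjacency matrix A of σ such that cos φ = μ^t. -/

import Mathlib

open scoped InnerProductSpace

/-- The powered rotation map `σ_t` on `V × ({0,…,d−1})^t`: successively apply `σ` along the
label sequence, and return the final vertex together with the reversed list of output labels. -/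
def rotPow {V : Type*} {d : ℕ} (σ : V × Fin d → V × Fin d) :
    (t : ℕ) → V × (Fin t → Fin d) → V × (Fin t → Fin d)
  | 0, x => x
  | t + 1, (u, g) =>
      let p := σ (u, g 0)
      let q := rotPow σ t (p.1, fun i => g i.succ)
      (q.1, Fin.snoc q.2 p.2)

/-- The normalized adjacency matrix of the rotation map `σ`. -/
noncomputable def adjMatrix {V : Type*} [Fintype V] [DecidableEq V] {d : ℕ}
    (σ : V × Fin d → V × Fin d) : Matrix V V ℝ :=
  Matrix.of fun u v => (Finset.univ.filter (fun g : Fin d => (σ (u, g)).1 = v)).card / d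

/-- The coin state `ψ_u = (1/√|L|) Σ_{g∈L} e_{(u,g)}` for a general label set `L`. -/
noncomputable def psiStateGen (V L : Type*) [Fintype V] [DecidableEq V] [Fintype L] (u : V) :
    EuclideanSpace ℂ (V × L) :=
  WithLp.toLp 2 (fun x : V × L => if x.1 = u then ((1 / Real.sqrt (Fintype.card L) : ℝ) : ℂ) else 0)

/-- The coin operator `C = 2 Σ_u |ψ_u⟩⟨ψ_u| − I` applied to a vector. -/
noncomputable def coinOpGen {V L : Type*} [Fintype V] [DecidableEq V] [Fintype L]
    (Φ : EuclideanSpace ℂ (V × L)) : EuclideanSpace ℂ (V × L) :=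
  (2 : ℂ) • (∑ u : V, ⟪psiStateGen V L u, Φ⟫_ℂ • psiStateGen V L u) - Φ

/-- The flip-flop walk operator `W = S C` for a rotation map `τ` on `V × L`. -/
noncomputable def walkOpGen {V L : Type*} [Fintype V] [DecidableEq V] [Fintype L]
    (τ : V × L → V × L) (Φ : EuclideanSpace ℂ (V × L)) : EuclideanSpace ℂ (V × L) :=
  WithLp.toLp 2 (fun x => coinOpGen Φ (τ x))

section Aux

open scoped Matrix

lemma rotPow_zero' {V : Type*} {d : ℕ} (σ : V × Fin d → V × Fin d)
    (x : V × (Fin 0 → Fin d)) : rotPow σ 0 x = x := rfl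

lemma rotPow_succ_def {V : Type*} {d : ℕ} (σ : V × Fin d → V × Fin d) (t : ℕ)
    (u : V) (g : Fin (t+1) → Fin d) :
    rotPow σ (t+1) (u, g) =
      ((rotPow σ t ((σ (u, g 0)).1, fun i => g i.succ)).1,
        Fin.snoc (rotPow σ t ((σ (u, g 0)).1, fun i => g i.succ)).2 (σ (u, g 0)).2) := rfl

lemma rotPow_succ_snoc {V : Type*} {d : ℕ} (σ : V × Fin d → V × Fin d) (t : ℕ) :
    ∀ (u : V) (g : Fin (t+1) → Fin d),
    rotPow σ (t+1) (u, g) =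
      ((σ ((rotPow σ t (u, fun i => g i.castSucc)).1, g (Fin.last t))).1,
        Fin.cons (σ ((rotPow σ t (u, fun i => g i.castSucc)).1, g (Fin.last t))).2
          (rotPow σ t (u, fun i => g i.castSucc)).2) := by
  induction t with
  | zero =>
      intro u g
      rw [rotPow_succ_def]
      simp only [rotPow_zero']
      have hl : Fin.last 0 = 0 := rfl
      refine Prod.ext (by rw [hl]) ?_
      funext i
      have : i = 0 := Fin.eq_zero i
      subst this
      simp [Fin.snoc, Fin.cons, hl]
  | succ t ih =>
      intro u g
      rw [rotPow_succ_def, ih, rotPow_succ_def σ t u (fun i => g i.castSucc)]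
      have harg : (fun i : Fin t => g (i.succ).castSucc) = fun i : Fin t => g (i.castSucc).succ := by
        funext i; rw [Fin.succ_castSucc]
      have hlast : g (Fin.last (t+1)) = g (Fin.last t).succ := by rw [Fin.succ_last]
      have hzero : (fun i : Fin (t+1) => g i.castSucc) 0 = g 0 := rfl
      refine Prod.ext ?_ ?_ <;>
        simp only [harg, hlast, hzero, Fin.cons_snoc_eq_snoc_cons]

lemma rotPow_invol {V : Type*} {d : ℕ} (σ : V × Fin d → V × Fin d)
    (hσ : ∀ x, σ (σ x) = x) :
    ∀ (t : ℕ) (x : V × (Fin t → Fin d)), rotPow σ t (rotPow σ t x) = x := by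
  intro t
  induction t with
  | zero => intro x; rfl
  | succ t ih =>
      rintro ⟨u, g⟩
      set p := σ (u, g 0) with hp
      set q := rotPow σ t (p.1, fun i => g i.succ) with hq
      have hA : (fun i : Fin t => (Fin.snoc q.2 p.2 : Fin (t+1) → Fin d) i.castSucc) = q.2 :=
        funext fun i => Fin.snoc_castSucc ..
      have hB : (Fin.snoc q.2 p.2 : Fin (t+1) → Fin d) (Fin.last t) = p.2 :=
        Fin.snoc_last _ _
      have h3 : rotPow σ t (q.1, q.2) = (p.1, fun i => g i.succ) := ih _
      have h4 : σ (p.1, p.2) = (u, g 0) := hσ (u, g 0)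
      calc rotPow σ (t+1) (rotPow σ (t+1) (u, g))
          = rotPow σ (t+1) (q.1, Fin.snoc q.2 p.2) := rfl
        _ = ((σ ((rotPow σ t (q.1, fun i => (Fin.snoc q.2 p.2 : Fin (t+1) → Fin d) i.castSucc)).1,
                (Fin.snoc q.2 p.2 : Fin (t+1) → Fin d) (Fin.last t))).1,
              Fin.cons (σ ((rotPow σ t (q.1, fun i => (Fin.snoc q.2 p.2 : Fin (t+1) → Fin d) i.castSucc)).1,
                (Fin.snoc q.2 p.2 : Fin (t+1) → Fin d) (Fin.last t))).2
                (rotPow σ t (q.1, fun i => (Fin.snoc q.2 p.2 : Fin (t+1) → Fin d) i.castSucc)).2) :=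
            rotPow_succ_snoc σ t q.1 (Fin.snoc q.2 p.2)
        _ = (u, g) := by
            rw [hA, hB, h3, h4]
            refine Prod.ext rfl ?_
            show Fin.cons (g 0) (fun i => g i.succ) = g
            exact Fin.cons_self_tail g

/-- The normalized adjacency matrix for a general label set. -/
noncomputable def adjGen {V L : Type*} [Fintype V] [DecidableEq V] [Fintype L]
    (τ : V × L → V × L) : Matrix V V ℝ :=
  Matrix.of fun u v =>
    (Finset.univ.filter (fun g : L => (τ (u, g)).1 = v)).card / (Fintype.card L)

lemma adjMatrix_eq_adjGen {V : Type*} [Fintype V] [DecidableEq V] {d : ℕ}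
    (σ : V × Fin d → V × Fin d) : adjMatrix σ = adjGen σ := by
  ext u v
  simp [adjMatrix, adjGen]

lemma adjGen_rotPow {V : Type*} [Fintype V] [DecidableEq V] {d : ℕ} (hd : 1 ≤ d)
    (σ : V × Fin d → V × Fin d) :
    ∀ t : ℕ, adjGen (rotPow σ t) = (adjGen σ) ^ t := by
  intro t
  induction t with
  | zero =>
      ext u v
      by_cases h : u = v <;>
        simp [adjGen, rotPow_zero', h, Matrix.one_apply, Finset.filter_true_of_mem]
  | succ t ih =>
      ext u v
      rw [pow_succ', ← ih]
      have hd0 : (d : ℝ) ≠ 0 := by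
        have : 0 < d := hd
        positivity
      have hcard : ((Finset.univ.filter
          (fun g : Fin (t+1) → Fin d => (rotPow σ (t+1) (u, g)).1 = v)).card : ℝ)
          = ∑ a : Fin d, ((Finset.univ.filter
              (fun r : Fin t → Fin d => (rotPow σ t ((σ (u, a)).1, r)).1 = v)).card : ℝ) := by
        rw [Finset.card_filter]
        rw [← Equiv.sum_comp (Fin.consEquiv (fun _ : Fin (t+1) => Fin d))
          (fun g : Fin (t+1) → Fin d => if (rotPow σ (t+1) (u, g)).1 = v then (1:ℕ) else 0)]
        rw [Fintype.sum_prod_type]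
        push_cast
        refine Finset.sum_congr rfl fun a _ => ?_
        rw [Finset.card_filter]
        push_cast
        refine Finset.sum_congr rfl fun r _ => ?_
        have h1 : (rotPow σ (t+1) (u, (Fin.consEquiv (fun _ : Fin (t+1) => Fin d)) (a, r))).1
            = (rotPow σ t ((σ (u, a)).1, r)).1 := by
          show (rotPow σ t ((σ (u, (Fin.cons a r : Fin (t+1) → Fin d) 0)).1,
            fun i => (Fin.cons a r : Fin (t+1) → Fin d) i.succ)).1 = _
          simp [Fin.cons_zero, Fin.cons_succ]
        rw [h1]
      have hB : ∀ f : V → ℝ,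
          (∑ w : V, ((Finset.univ.filter (fun a : Fin d => (σ (u, a)).1 = w)).card : ℝ) * f w)
          = ∑ a : Fin d, f ((σ (u, a)).1) := by
        intro f
        have hw : ∀ w : V, ((Finset.univ.filter (fun a : Fin d => (σ (u, a)).1 = w)).card : ℝ) * f w
            = ∑ a : Fin d, if (σ (u, a)).1 = w then f w else 0 := by
          intro w
          rw [Finset.card_filter]
          push_cast
          rw [Finset.sum_mul]
          refine Finset.sum_congr rfl fun a _ => ?_
          split <;> simp
        simp only [hw]
        rw [Finset.sum_comm]
        refine Finset.sum_congr rfl fun a _ => ?_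
        simp
      simp only [adjGen, Matrix.mul_apply, Matrix.of_apply]
      rw [hcard]
      have hcards : (Fintype.card (Fin (t+1) → Fin d) : ℝ) = (d:ℝ) ^ (t+1) := by
        rw [Fintype.card_fun]; push_cast [Fintype.card_fin]; ring
      have hcardt : (Fintype.card (Fin t → Fin d) : ℝ) = (d:ℝ) ^ t := by
        rw [Fintype.card_fun]; push_cast [Fintype.card_fin]; ring
      rw [hcards]
      simp only [hcardt, Fintype.card_fin]
      have hterm : ∀ w : V,
          ((Finset.univ.filter (fun a : Fin d => (σ (u, a)).1 = w)).card : ℝ) / d *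
            (((Finset.univ.filter (fun r : Fin t → Fin d => (rotPow σ t (w, r)).1 = v)).card : ℝ) / (d:ℝ)^t)
          = ((Finset.univ.filter (fun a : Fin d => (σ (u, a)).1 = w)).card : ℝ) *
            ((Finset.univ.filter (fun r : Fin t → Fin d => (rotPow σ t (w, r)).1 = v)).card : ℝ) / (d:ℝ)^(t+1) := by
        intro w
        rw [div_mul_div_comm, ← pow_succ']
      simp only [hterm]
      conv_rhs => rw [← Finset.sum_div]
      congr 1
      exact (hB (fun w => ((Finset.univ.filter
        (fun r : Fin t → Fin d => (rotPow σ t (w, r)).1 = v)).card : ℝ))).symm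

lemma adjMatrix_isHermitian {V : Type*} [Fintype V] [DecidableEq V] {d : ℕ}
    (σ : V × Fin d → V × Fin d) (hσ : ∀ x, σ (σ x) = x) :
    (adjMatrix σ).IsHermitian := by
  rw [Matrix.IsHermitian, Matrix.conjTranspose_eq_transpose_of_trivial]
  ext u v
  show adjMatrix σ v u = adjMatrix σ u v
  simp only [adjMatrix, Matrix.of_apply]
  congr 1
  norm_cast
  refine Finset.card_bij' (fun g _ => (σ (v, g)).2) (fun h _ => (σ (u, h)).2) ?_ ?_ ?_ ?_
  · intro g hg
    simp only [Finset.mem_filter, Finset.mem_univ, true_and] at hg ⊢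
    have : σ ((σ (v, g)).1, (σ (v, g)).2) = (v, g) := hσ (v, g)
    rw [hg] at this
    rw [this]
  · intro h hh
    simp only [Finset.mem_filter, Finset.mem_univ, true_and] at hh ⊢
    have : σ ((σ (u, h)).1, (σ (u, h)).2) = (u, h) := hσ (u, h)
    rw [hh] at this
    rw [this]
  · intro g hg
    simp only [Finset.mem_filter, Finset.mem_univ, true_and] at hg
    have : σ ((σ (v, g)).1, (σ (v, g)).2) = (v, g) := hσ (v, g)
    rw [hg] at this
    exact congrArg Prod.snd this
  · intro h hh
    simp only [Finset.mem_filter, Finset.mem_univ, true_and] at hh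
    have : σ ((σ (u, h)).1, (σ (u, h)).2) = (u, h) := hσ (u, h)
    rw [hh] at this
    exact congrArg Prod.snd this

lemma inner_eq_dot {V : Type*} [Fintype V] (x y : EuclideanSpace ℝ V) :
    ⟪x, y⟫_ℝ = (⇑x) ⬝ᵥ (⇑y) := by
  simp [PiLp.inner_apply, dotProduct, mul_comm]

lemma pow_mulVec_eigbasis {V : Type*} [Fintype V] [DecidableEq V]
    (A : Matrix V V ℝ) (hA : A.IsHermitian) (t : ℕ) (i : V) :
    (A ^ t).mulVec (hA.eigenvectorBasis i) = (hA.eigenvalues i ^ t) • ⇑(hA.eigenvectorBasis i) := by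
  induction t with
  | zero => rw [pow_zero, pow_zero, Matrix.one_mulVec, one_smul]
  | succ t ih =>
      rw [pow_succ', ← Matrix.mulVec_mulVec, ih, Matrix.mulVec_smul,
        hA.mulVec_eigenvectorBasis, smul_smul, pow_succ', mul_comm]

lemma eig_of_pow_eig {V : Type*} [Fintype V] [DecidableEq V]
    (A : Matrix V V ℝ) (hA : A.IsHermitian) (t : ℕ) (lam : ℝ) (w : V → ℝ)
    (hw : w ≠ 0) (h : (A ^ t).mulVec w = lam • w) :
    ∃ (μ : ℝ) (v : V → ℝ), v ≠ 0 ∧ A.mulVec v = μ • v ∧ lam = μ ^ t := by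
  set b := hA.eigenvectorBasis with hb
  have hrepr : b.repr (WithLp.toLp 2 w : EuclideanSpace ℝ V) ≠ 0 := fun hc => hw (by
    have := congrArg b.repr.symm hc
    simpa using this)
  have hex : ∃ i, b.repr (WithLp.toLp 2 w : EuclideanSpace ℝ V) i ≠ 0 := by
    by_contra h'
    push_neg at h'
    exact hrepr (by ext j; exact h' j)
  obtain ⟨i, hi⟩ := hex
  refine ⟨hA.eigenvalues i, ⇑(b i), ?_, hA.mulVec_eigenvectorBasis i, ?_⟩
  · intro hc
    exact b.orthonormal.ne_zero i (by ext j; exact congrFun hc j)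
  · have h1 : ⟪(b i : EuclideanSpace ℝ V), (WithLp.toLp 2 ((A ^ t).mulVec w) : EuclideanSpace ℝ V)⟫_ℝ
        = lam * b.repr (WithLp.toLp 2 w : EuclideanSpace ℝ V) i := by
      rw [h]
      have : ⟪(b i : EuclideanSpace ℝ V), (WithLp.toLp 2 (lam • w) : EuclideanSpace ℝ V)⟫_ℝ
          = lam * ⟪(b i : EuclideanSpace ℝ V), (WithLp.toLp 2 w : EuclideanSpace ℝ V)⟫_ℝ := by
        rw [WithLp.toLp_smul, real_inner_smul_right]
      rw [this, b.repr_apply_apply]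
    have h2 : ⟪(b i : EuclideanSpace ℝ V), (WithLp.toLp 2 ((A ^ t).mulVec w) : EuclideanSpace ℝ V)⟫_ℝ
        = hA.eigenvalues i ^ t * b.repr (WithLp.toLp 2 w : EuclideanSpace ℝ V) i := by
      have hsymm : (A ^ t)ᵀ = A ^ t := by
        have := (hA.pow t).eq
        rwa [Matrix.conjTranspose_eq_transpose_of_trivial] at this
      rw [inner_eq_dot]
      show ((b i : EuclideanSpace ℝ V) : V → ℝ) ⬝ᵥ ((A ^ t) *ᵥ w)
          = hA.eigenvalues i ^ t * b.repr (WithLp.toLp 2 w : EuclideanSpace ℝ V) i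
      rw [Matrix.dotProduct_mulVec, ← Matrix.mulVec_transpose, hsymm,
        pow_mulVec_eigbasis A hA t i, smul_dotProduct, b.repr_apply_apply,
        inner_eq_dot, smul_eq_mul]
    have := h1.symm.trans h2
    exact mul_right_cancel₀ hi this

end Aux

/-- If the powered rotation map `σ_t` has no fixed points and `Φ` is a unit
vector with `W_t Φ = e^{iφ} Φ`, `0 < φ < π`, then `cos φ = μ^t` for some real eigenvalue `μ`
of the normalized adjacency matrix of `σ`. -/
theorem powered_walk_eigenphase_is_power_of_adjacency_eigenvalue
    {V : Type*} [Fintype V] [DecidableEq V] [Nonempty V] {d : ℕ} (hd : 1 ≤ d)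
    (σ : V × Fin d → V × Fin d) (hσ : ∀ x, σ (σ x) = x)
    (t : ℕ) (ht : 1 ≤ t)
    (hfix : ∀ x : V × (Fin t → Fin d), rotPow σ t x ≠ x)
    (Φ : EuclideanSpace ℂ (V × (Fin t → Fin d))) (hΦ : ‖Φ‖ = 1)
    (φ : ℝ) (hφ0 : 0 < φ) (hφπ : φ < Real.pi)
    (hW : walkOpGen (rotPow σ t) Φ = Complex.exp (φ * Complex.I) • Φ) :
    ∃ (μ : ℝ) (w : V → ℝ), w ≠ 0 ∧ (adjMatrix σ).mulVec w = μ • w ∧ Real.cos φ = μ ^ t := by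
  classical
  have hτ : ∀ x, rotPow σ t (rotPow σ t x) = x := rotPow_invol σ hσ t
  have hDpos : 0 < Fintype.card (Fin t → Fin d) := by
    rw [Fintype.card_fun, Fintype.card_fin, Fintype.card_fin]
    exact pow_pos hd t
  set Dc : ℂ := (Fintype.card (Fin t → Fin d) : ℂ) with hDcdef
  have hDc : Dc ≠ 0 := by
    rw [hDcdef]
    exact_mod_cast hDpos.ne'
  set s : V → ℂ := fun u => ∑ g : Fin t → Fin d, Φ (u, g) with hsdef
  set e : ℂ := Complex.exp (φ * Complex.I) with hedef
  have he : e ≠ 0 := Complex.exp_ne_zero _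
  -- inner products with coin states
  have hinner : ∀ u : V, ⟪psiStateGen V (Fin t → Fin d) u, Φ⟫_ℂ
      = ((1 / Real.sqrt (Fintype.card (Fin t → Fin d)) : ℝ) : ℂ) * s u := by
    intro u
    rw [PiLp.inner_apply, Fintype.sum_prod_type]
    simp only [RCLike.inner_apply']
    have hterm : ∀ (w : V) (g : Fin t → Fin d),
        (starRingEnd ℂ) (psiStateGen V (Fin t → Fin d) u (w, g)) * Φ (w, g)
        = if w = u then ((1 / Real.sqrt (Fintype.card (Fin t → Fin d)) : ℝ) : ℂ) * Φ (w, g)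
          else 0 := by
      intro w g
      by_cases h : w = u <;> simp [psiStateGen, h]
    simp only [hterm]
    rw [Finset.sum_congr rfl (fun w (_ : w ∈ Finset.univ) =>
      (show (∑ g : Fin t → Fin d, if w = u then
            ((1 / Real.sqrt (Fintype.card (Fin t → Fin d)) : ℝ) : ℂ) * Φ (w, g) else 0)
          = if w = u then ((1 / Real.sqrt (Fintype.card (Fin t → Fin d)) : ℝ) : ℂ)
              * ∑ g : Fin t → Fin d, Φ (w, g) else 0 by
        split
        · rw [← Finset.mul_sum]
        · simp)), Finset.sum_ite_eq' Finset.univ u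
      (fun w => ((1 / Real.sqrt (Fintype.card (Fin t → Fin d)) : ℝ) : ℂ)
        * ∑ g : Fin t → Fin d, Φ (w, g))]
    simp only [Finset.mem_univ, if_true]
    rfl
  have hc2 : ((1 / Real.sqrt (Fintype.card (Fin t → Fin d)) : ℝ) : ℂ) *
      ((1 / Real.sqrt (Fintype.card (Fin t → Fin d)) : ℝ) : ℂ) = 1 / Dc := by
    rw [← Complex.ofReal_mul]
    rw [hDcdef]
    rw [show ((Fintype.card (Fin t → Fin d) : ℕ) : ℂ)
      = (((Fintype.card (Fin t → Fin d) : ℕ) : ℝ) : ℂ) by push_cast; ring]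
    rw [← Complex.ofReal_one, ← Complex.ofReal_div]
    congr 1
    rw [div_mul_div_comm, one_mul, Real.mul_self_sqrt (by positivity)]
  -- pointwise form of the coin operator
  have hcoin : ∀ y : V × (Fin t → Fin d), coinOpGen Φ y = 2 / Dc * s y.1 - Φ y := by
    intro y
    have hsum : (∑ u : V, ⟪psiStateGen V (Fin t → Fin d) u, Φ⟫_ℂ •
        psiStateGen V (Fin t → Fin d) u) y
        = ∑ u : V, ⟪psiStateGen V (Fin t → Fin d) u, Φ⟫_ℂ *
            psiStateGen V (Fin t → Fin d) u y :=
      by rw [WithLp.ofLp_sum, Finset.sum_apply]; simp only [WithLp.ofLp_smul, Pi.smul_apply, smul_eq_mul]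
    have h0 : coinOpGen Φ y = 2 * (∑ u : V, ⟪psiStateGen V (Fin t → Fin d) u, Φ⟫_ℂ •
        psiStateGen V (Fin t → Fin d) u) y - Φ y := rfl
    rw [h0, hsum]
    have hterm : ∀ u : V, ⟪psiStateGen V (Fin t → Fin d) u, Φ⟫_ℂ *
        psiStateGen V (Fin t → Fin d) u y
        = if y.1 = u then ((1 / Real.sqrt (Fintype.card (Fin t → Fin d)) : ℝ) : ℂ) * s u *
            ((1 / Real.sqrt (Fintype.card (Fin t → Fin d)) : ℝ) : ℂ) else 0 := by
      intro u
      rw [hinner]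
      simp only [psiStateGen]
      split <;> simp
    simp only [hterm]
    rw [Finset.sum_ite_eq Finset.univ y.1
      (fun u => ((1 / Real.sqrt (Fintype.card (Fin t → Fin d)) : ℝ) : ℂ) * s u *
        ((1 / Real.sqrt (Fintype.card (Fin t → Fin d)) : ℝ) : ℂ))]
    simp only [Finset.mem_univ, if_true]
    linear_combination (2 * s y.1) * hc2
  -- the eigenvector equation, pointwise
  have h1 : ∀ x : V × (Fin t → Fin d),
      2 / Dc * s ((rotPow σ t x).1) - Φ (rotPow σ t x) = e * Φ x := by
    intro x
    have hx := congrArg (fun v => v x) hW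
    have hl : walkOpGen (rotPow σ t) Φ x = coinOpGen Φ (rotPow σ t x) := rfl
    have hr : (Complex.exp (φ * Complex.I) • Φ) x = e * Φ x := rfl
    rw [hl, hr, hcoin (rotPow σ t x)] at hx
    exact hx
  have h2 : ∀ x : V × (Fin t → Fin d),
      2 / Dc * s x.1 - Φ x = e * Φ (rotPow σ t x) := by
    intro x
    have := h1 (rotPow σ t x)
    rwa [hτ x] at this
  -- e^2 ≠ 1
  have he2 : e * e ≠ 1 := by
    intro hc
    rw [hedef, ← Complex.exp_add, Complex.exp_eq_one_iff] at hc
    obtain ⟨n, hn⟩ := hc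
    have him := congrArg Complex.im hn
    simp [Complex.add_im, Complex.mul_im, Complex.I_im, Complex.I_re,
      Complex.ofReal_re, Complex.ofReal_im] at him
    -- him : φ + φ = n * (2 * π)  (roughly)
    have hφeq : 2 * φ = (n : ℝ) * (2 * Real.pi) := by linarith [him]
    have hpi := Real.pi_pos
    have hφn : φ = (n : ℝ) * Real.pi := by linarith
    have hn0 : (0 : ℝ) < (n : ℝ) := by
      by_contra hcon
      push_neg at hcon
      nlinarith
    have hn1 : (n : ℝ) < 1 := by
      by_contra hcon
      push_neg at hcon
      nlinarith
    have : (0 : ℤ) < n := by exact_mod_cast hn0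
    have : n < 1 := by exact_mod_cast hn1
    omega
  -- nonvanishing of s
  have hΦne : Φ ≠ 0 := by
    intro hc
    rw [hc] at hΦ
    simp at hΦ
  by_cases hs : ∀ u, s u = 0
  · exfalso
    apply hΦne
    ext x
    have e1 := h1 x
    have e2 := h2 x
    rw [hs] at e1
    rw [hs] at e2
    have hz : (e * e - 1) * Φ x = 0 := by linear_combination e2 - e * e1
    have := (mul_eq_zero.mp hz).resolve_left (sub_ne_zero.mpr he2)
    exact this
  push_neg at hs
  obtain ⟨u0, hu0⟩ := hs
  -- the key eigenvalue identity over ℂ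
  have hX : ∀ x : V × (Fin t → Fin d),
      2 / Dc * s x.1 + e * e * Φ x - Φ x = 2 * e / Dc * s ((rotPow σ t x).1) := by
    intro x
    linear_combination (h2 x) - e * (h1 x)
  have hNg : ∀ u : V, (∑ g : Fin t → Fin d, s ((rotPow σ t (u, g)).1))
      = ∑ w : V, ((Finset.univ.filter
          (fun g : Fin t → Fin d => (rotPow σ t (u, g)).1 = w)).card : ℂ) * s w := by
    intro u
    have hw : ∀ w : V, ((Finset.univ.filter
        (fun g : Fin t → Fin d => (rotPow σ t (u, g)).1 = w)).card : ℂ) * s w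
        = ∑ g : Fin t → Fin d, if (rotPow σ t (u, g)).1 = w then s w else 0 := by
      intro w
      rw [Finset.card_filter]
      push_cast
      rw [Finset.sum_mul]
      refine Finset.sum_congr rfl fun g _ => ?_
      split <;> simp
    calc (∑ g : Fin t → Fin d, s ((rotPow σ t (u, g)).1))
        = ∑ g : Fin t → Fin d, ∑ w : V,
            (if (rotPow σ t (u, g)).1 = w then s w else 0) := by
          refine Finset.sum_congr rfl fun g _ => ?_
          rw [Finset.sum_ite_eq Finset.univ ((rotPow σ t (u, g)).1) s]
          simp
      _ = ∑ w : V, ∑ g : Fin t → Fin d,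
            (if (rotPow σ t (u, g)).1 = w then s w else 0) := Finset.sum_comm
      _ = ∑ w : V, ((Finset.univ.filter
            (fun g : Fin t → Fin d => (rotPow σ t (u, g)).1 = w)).card : ℂ) * s w :=
          Finset.sum_congr rfl fun w _ => (hw w).symm
  have hkey0 : ∀ u : V, (1 + e * e) * s u
      = 2 * e / Dc * ∑ w : V, ((Finset.univ.filter
          (fun g : Fin t → Fin d => (rotPow σ t (u, g)).1 = w)).card : ℂ) * s w := by
    intro u
    have hsum1 : (∑ g : Fin t → Fin d, (2 / Dc * s u + e * e * Φ (u, g) - Φ (u, g)))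
        = ∑ g : Fin t → Fin d, 2 * e / Dc * s ((rotPow σ t (u, g)).1) :=
      Finset.sum_congr rfl fun g _ => hX (u, g)
    calc (1 + e * e) * s u
        = ∑ g : Fin t → Fin d, (2 / Dc * s u + e * e * Φ (u, g) - Φ (u, g)) := by
          rw [Finset.sum_sub_distrib, Finset.sum_add_distrib, Finset.sum_const,
            ← Finset.mul_sum, nsmul_eq_mul, Finset.card_univ]
          have hc : ((Fintype.card (Fin t → Fin d) : ℂ)) = Dc := rfl
          have hsu : (∑ g : Fin t → Fin d, Φ (u, g)) = s u := rfl
          rw [hc, hsu]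
          field_simp
          ring
      _ = ∑ g : Fin t → Fin d, 2 * e / Dc * s ((rotPow σ t (u, g)).1) := hsum1
      _ = 2 * e / Dc * ∑ g : Fin t → Fin d, s ((rotPow σ t (u, g)).1) := by
          rw [Finset.mul_sum]
      _ = 2 * e / Dc * ∑ w : V, ((Finset.univ.filter
            (fun g : Fin t → Fin d => (rotPow σ t (u, g)).1 = w)).card : ℂ) * s w := by
          rw [hNg u]
  have hcos : 1 + e * e = 2 * e * ((Real.cos φ : ℝ) : ℂ) := by
    rw [Complex.ofReal_cos, hedef, Complex.exp_mul_I]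
    linear_combination (-1 : ℂ) * Complex.sin_sq_add_cos_sq (φ : ℂ)
      + Complex.sin (φ : ℂ) ^ 2 * Complex.I_sq
  have hfin : ∀ u : V, (∑ w : V, ((Finset.univ.filter
      (fun g : Fin t → Fin d => (rotPow σ t (u, g)).1 = w)).card : ℂ) * s w)
      = Dc * ((Real.cos φ : ℝ) : ℂ) * s u := by
    intro u
    have h0 := hkey0 u
    rw [hcos] at h0
    have h2e : (2 : ℂ) * e ≠ 0 := by
      intro hc
      rcases mul_eq_zero.mp hc with h | h
      · norm_num at h
      · exact he h
    apply mul_left_cancel₀ h2e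
    calc 2 * e * (∑ w : V, ((Finset.univ.filter
          (fun g : Fin t → Fin d => (rotPow σ t (u, g)).1 = w)).card : ℂ) * s w)
        = Dc * (2 * e / Dc * ∑ w : V, ((Finset.univ.filter
            (fun g : Fin t → Fin d => (rotPow σ t (u, g)).1 = w)).card : ℂ) * s w) := by
          field_simp
      _ = Dc * (2 * e * ((Real.cos φ : ℝ) : ℂ) * s u) := by rw [← h0]
      _ = 2 * e * (Dc * ((Real.cos φ : ℝ) : ℂ) * s u) := by ring
  -- pass to a real linear functional
  have hDr : ((Fintype.card (Fin t → Fin d) : ℝ)) ≠ 0 := by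
    exact_mod_cast hDpos.ne'
  have hMP : ∀ (P : ℂ →ₗ[ℝ] ℝ),
      (adjGen (rotPow σ t)).mulVec (fun u => P (s u))
        = Real.cos φ • (fun u => P (s u)) := by
    intro P
    funext u
    have h0 := congrArg P (hfin u)
    rw [map_sum] at h0
    have hterm : ∀ w : V, P (((Finset.univ.filter
        (fun g : Fin t → Fin d => (rotPow σ t (u, g)).1 = w)).card : ℂ) * s w)
        = ((Finset.univ.filter
            (fun g : Fin t → Fin d => (rotPow σ t (u, g)).1 = w)).card : ℝ) * P (s w) := by
      intro w
      have hsm : ((((Finset.univ.filter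
          (fun g : Fin t → Fin d => (rotPow σ t (u, g)).1 = w)).card : ℕ)) : ℂ) * s w
          = (((Finset.univ.filter
            (fun g : Fin t → Fin d => (rotPow σ t (u, g)).1 = w)).card : ℕ) : ℝ) • s w := by
        rw [Complex.real_smul]
        push_cast
        ring
      rw [hsm, map_smul, smul_eq_mul]
    simp only [hterm] at h0
    have hrhs : P (Dc * ((Real.cos φ : ℝ) : ℂ) * s u)
        = ((Fintype.card (Fin t → Fin d) : ℝ) * Real.cos φ) * P (s u) := by
      have hsm : Dc * ((Real.cos φ : ℝ) : ℂ) * s u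
          = ((Fintype.card (Fin t → Fin d) : ℝ) * Real.cos φ) • s u := by
        rw [Complex.real_smul, hDcdef]
        push_cast
        ring
      rw [hsm, map_smul, smul_eq_mul]
    rw [hrhs] at h0
    -- now compute the matrix-vector product entry
    show (∑ w : V, adjGen (rotPow σ t) u w * P (s w)) = Real.cos φ * P (s u)
    have hentry : ∀ w : V, adjGen (rotPow σ t) u w * P (s w)
        = ((Finset.univ.filter
            (fun g : Fin t → Fin d => (rotPow σ t (u, g)).1 = w)).card : ℝ) * P (s w)
          / (Fintype.card (Fin t → Fin d) : ℝ) := by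
      intro w
      simp only [adjGen, Matrix.of_apply]
      ring
    simp only [hentry]
    rw [← Finset.sum_div, h0]
    field_simp
  -- pick a nonvanishing real or imaginary part
  have hcases : (fun u => Complex.reLm (s u)) ≠ 0 ∨ (fun u => Complex.imLm (s u)) ≠ 0 := by
    by_contra hc
    push_neg at hc
    obtain ⟨hre, him⟩ := hc
    apply hu0
    have h1' := congrFun hre u0
    have h2' := congrFun him u0
    simp only [Pi.zero_apply, Complex.reLm_coe, Complex.imLm_coe] at h1' h2'
    exact Complex.ext h1' h2'
  have hfinal : ∃ w0 : V → ℝ, w0 ≠ 0 ∧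
      ((adjMatrix σ) ^ t).mulVec w0 = Real.cos φ • w0 := by
    rcases hcases with h | h
    · exact ⟨fun u => Complex.reLm (s u), h, by
        rw [adjMatrix_eq_adjGen, ← adjGen_rotPow hd σ t]; exact hMP Complex.reLm⟩
    · exact ⟨fun u => Complex.imLm (s u), h, by
        rw [adjMatrix_eq_adjGen, ← adjGen_rotPow hd σ t]; exact hMP Complex.imLm⟩
  obtain ⟨w0, hw0, hMw0⟩ := hfinal
  exact eig_of_pow_eig (adjMatrix σ) (adjMatrix_isHermitian σ hσ) t (Real.cos φ) w0 hw0 hMw0
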